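/- If f and g are nonzero elements of a UFD R with greatest common divisor c, then the sequence 0 → R →^{(g/c, -f/c)} R² →^{(f g)} R → R/(f,g) → 0 is exact; in particular the kernel of the map R² → R, (a,b) ↦ af + bg, is a free R-module of rank 1 generated by (g/c, −f/c). -/

import Mathlib

/-- If `f` and `g` are nonzero elements of a UFD `R` with greatest common divisor `c`
(say `f = c * f'`, `g = c * g'`), then
`0 → R →^{(g/c, -f/c)} R² →^{(f g)} R → R/(f,g) → 0` is exact; in particular the kernel of
`(a,b) ↦ af + bg` is free of rank 1, generated by `(g/c, -f/c)`. -/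
theorem ufd_resolution_two_generators
    (R : Type*) [CommRing R] [IsDomain R] [UniqueFactorizationMonoid R]
    (f g c f' g' : R) (hf : f ≠ 0) (hg : g ≠ 0)
    (hfc : f = c * f') (hgc : g = c * g')
    (hgcd : ∀ d : R, d ∣ f → d ∣ g → d ∣ c)
    (ψ : R →ₗ[R] R × R) (φ : (R × R) →ₗ[R] R)
    (hψ : ∀ x : R, ψ x = (x * g', -(x * f')))
    (hφ : ∀ v : R × R, φ v = v.1 * f + v.2 * g) :
    Function.Injective ψ ∧
      Function.Exact ψ φ ∧
      Function.Exact φ (Ideal.span {f, g}).mkQ ∧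
      Function.Surjective (Ideal.span {f, g}).mkQ ∧
      LinearMap.ker φ = Submodule.span R {(g', -f')} := by
  have hc : c ≠ 0 := fun h => hf (by simp [hfc, h])
  have hf' : f' ≠ 0 := fun h => hf (by simp [hfc, h])
  have hg' : g' ≠ 0 := fun h => hg (by simp [hgc, h])
  have hrel : IsRelPrime g' f' := by
    intro d hdg hdf
    have h1 : c * d ∣ f := hfc ▸ mul_dvd_mul_left c hdf
    have h2 : c * d ∣ g := hgc ▸ mul_dvd_mul_left c hdg
    obtain ⟨e, he⟩ := hgcd _ h1 h2
    refine IsUnit.of_mul_eq_one (a := d) e (mul_left_cancel₀ hc ?_)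
    rw [mul_one, ← mul_assoc, ← he]
  have key : ∀ v : R × R, φ v = 0 → ∃ t, v.1 = t * g' ∧ v.2 = -(t * f') := by
    intro v hv
    rw [hφ] at hv
    have h0 : c * (v.1 * f' + v.2 * g') = 0 := by
      rw [hfc, hgc] at hv; linear_combination hv
    have h1 : v.1 * f' + v.2 * g' = 0 := by
      rcases mul_eq_zero.mp h0 with h | h
      · exact absurd h hc
      · exact h
    have hdvd : g' ∣ v.1 * f' := ⟨-v.2, by linear_combination h1⟩
    obtain ⟨t, ht⟩ := hrel.dvd_of_dvd_mul_right hdvd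
    refine ⟨t, by rw [ht, mul_comm], ?_⟩
    have : g' * v.2 = g' * (-(t * f')) := by
      rw [ht] at h1; linear_combination h1
    exact mul_left_cancel₀ hg' this
  refine ⟨?_, ?_, ?_, Submodule.mkQ_surjective _, ?_⟩
  · intro x y hxy
    rw [hψ x, hψ y, Prod.mk.injEq] at hxy
    exact mul_right_cancel₀ hg' hxy.1
  · intro v
    constructor
    · intro hv
      obtain ⟨t, h1, h2⟩ := key v hv
      exact ⟨t, by rw [hψ, ← h1, ← h2]⟩
    · rintro ⟨t, rfl⟩
      rw [hψ, hφ]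
      simp only
      rw [hfc, hgc]; ring
  · intro y
    rw [Submodule.mkQ_apply, Submodule.Quotient.mk_eq_zero]
    constructor
    · intro hy
      obtain ⟨a, b, hab⟩ := Ideal.mem_span_pair.mp hy
      exact ⟨(a, b), by rw [hφ]; simpa using hab⟩
    · rintro ⟨v, rfl⟩
      rw [hφ]
      exact Ideal.mem_span_pair.mpr ⟨v.1, v.2, rfl⟩
  · ext v
    rw [LinearMap.mem_ker, Submodule.mem_span_singleton]
    constructor
    · intro hv
      obtain ⟨t, h1, h2⟩ := key v hv
      exact ⟨t, by rw [Prod.smul_mk]; ext <;> simp [h1, h2, mul_comm]⟩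
    · rintro ⟨t, rfl⟩
      rw [hφ]
      simp only [Prod.smul_mk, smul_eq_mul]
      rw [hfc, hgc]; ring
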